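/- Let A be a Boolean path sum with k_A path variables, m inputs and n outputs, and let B be a Boolean path sum with k_B path variables, k inputs and l outputs. Define the tensor-product path sum A ⊗ B to have path-variable space 𝔽₂^{k_A} × 𝔽₂^{k_B}, scalar s_A·s_B, phase function (u,w) ↦ P_A(u) + P_B(w), output function (u,w) ↦ (O_A(u), O_B(w)) (concatenation) and input function (u,w) ↦ (I_A(u), I_B(w)). Then eval(A ⊗ B) equals the Kronecker (tensor) product of the matrices eval(A) and eval(B). -/

import Mathlib

/-- The sign `(−1)^b` for `b ∈ 𝔽₂`: `1` if `b = 0` and `−1` if `b = 1`. -/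
noncomputable def pmSign (b : ZMod 2) : ℂ := if b = 0 then 1 else -1

/-- The matrix `|b⟩⟨c|` whose `(b',c')` entry is `1` if `b' = b` and `c' = c`, else `0`. -/
noncomputable def ketbra {α β : Type*} [DecidableEq α] [DecidableEq β] (b : α) (c : β) :
    Matrix α β ℂ := fun b' c' => if b' = b ∧ c' = c then 1 else 0

/-- Evaluation of a Boolean path sum with path-variable space `V`, scalar `s`,
phase `P`, output function `O` and input function `I`:
`s · ∑_{v ∈ V} (−1)^{P v} |O v⟩⟨I v|`. -/
noncomputable def psEval {V α β : Type*} [Fintype V] [DecidableEq α] [DecidableEq β]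
    (s : ℂ) (P : V → ZMod 2) (O : V → α) (I : V → β) : Matrix α β ℂ :=
  s • ∑ v, pmSign (P v) • ketbra (O v) (I v)

lemma pmSign_add (a b : ZMod 2) : pmSign (a + b) = pmSign a * pmSign b := by
  have h : (1 : ZMod 2) + 1 = 0 := by decide
  rcases (show ∀ x : ZMod 2, x = 0 ∨ x = 1 by decide) a with rfl | rfl <;>
    rcases (show ∀ x : ZMod 2, x = 0 ∨ x = 1 by decide) b with rfl | rfl <;> simp +decide [pmSign, h]

open Kronecker in
/-- Soundness of the tensor product of Boolean path sums: the path sum with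
path variables `(u,w) ∈ 𝔽₂^{k_A} × 𝔽₂^{k_B}`, scalar `s_A·s_B`, phase
`P_A(u) + P_B(w)`, outputs `(O_A(u), O_B(w))` and inputs `(I_A(u), I_B(w))`
evaluates to the Kronecker product `eval(A) ⊗ₖ eval(B)`. -/
theorem psEval_tensor {kA kB k l m n : ℕ}
    (sA : ℂ) (PA : (Fin kA → ZMod 2) → ZMod 2)
    (OA : (Fin kA → ZMod 2) → (Fin m → ZMod 2))
    (IA : (Fin kA → ZMod 2) → (Fin n → ZMod 2))
    (sB : ℂ) (PB : (Fin kB → ZMod 2) → ZMod 2)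
    (OB : (Fin kB → ZMod 2) → (Fin l → ZMod 2))
    (IB : (Fin kB → ZMod 2) → (Fin k → ZMod 2)) :
    psEval (V := (Fin kA → ZMod 2) × (Fin kB → ZMod 2))
      (sA * sB)
      (fun p => PA p.1 + PB p.2)
      (fun p => (OA p.1, OB p.2))
      (fun p => (IA p.1, IB p.2))
      = psEval sA PA OA IA ⊗ₖ psEval sB PB OB IB := by
  ext ⟨a1, a2⟩ ⟨b1, b2⟩
  simp only [psEval, Matrix.kroneckerMap_apply, Matrix.smul_apply, Matrix.sum_apply,
    pmSign_add, ketbra, Prod.mk.injEq, smul_eq_mul, Fintype.sum_prod_type]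
  rw [mul_mul_mul_comm, Finset.sum_mul_sum]
  congr 1
  refine Finset.sum_congr rfl fun u _ => Finset.sum_congr rfl fun w _ => ?_
  by_cases h1 : a1 = OA u ∧ b1 = IA u <;> by_cases h2 : a2 = OB w ∧ b2 = IB w <;>
    simp [h1, h2] <;> tauto
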